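/- Let h : ℝ × ℝ^d → ℝ be continuously differentiable with bounded partial derivatives. Then the Stein solution f_h is bounded and satisfies ‖f_h‖_∞ ≤ ‖∂_x h‖_∞. -/

import Mathlib

open MeasureTheory ProbabilityTheory

section Aux

open Real Set Filter NNReal ENNReal


lemma gauss_sq_int {b : ℝ} (hb : 0 < b) :
    ∫ x : ℝ, x ^ 2 * Real.exp (-b * x ^ 2) = Real.sqrt (π / b) / (2 * b) := by
  set e : ℝ → ℝ := fun x => Real.exp (-b * x ^ 2) with he
  have hb' : (2 * b) ≠ 0 := by positivity
  have hF : ∀ x : ℝ, HasDerivAt (fun x : ℝ => -(2 * b)⁻¹ * x * e x)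
      (x ^ 2 * e x - (2 * b)⁻¹ * e x) x := by
    intro x
    have h1 : HasDerivAt (fun x : ℝ => -b * x ^ 2) (-b * (2 * x)) x := by
      simpa using ((hasDerivAt_pow 2 x).const_mul (-b))
    have h2 : HasDerivAt e (-b * (2 * x) * e x) x := by
      simpa [he, mul_comm] using h1.exp
    have h3 : HasDerivAt (fun x : ℝ => -(2 * b)⁻¹ * x)
        (-(2 * b)⁻¹) x := by simpa using (hasDerivAt_id x).const_mul (-(2 * b)⁻¹)
    have := h3.mul h2
    refine this.congr_deriv ?_
    have hbinv : (2 * b)⁻¹ * b = 1/2 := by field_simp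
    linear_combination (2 * x ^ 2 * e x) * hbinv
  have hint2 : Integrable (fun x : ℝ => x ^ 2 * e x) :=
    (integrable_rpow_mul_exp_neg_mul_sq hb (s := 2) (by norm_num)).congr
      (Filter.Eventually.of_forall fun x => by
        show x ^ (2:ℝ) * _ = _
        rw [show ((2:ℝ)) = ((2:ℕ) : ℝ) by norm_num, Real.rpow_natCast])
  have hinte : Integrable e := integrable_exp_neg_mul_sq hb
  have hintF' : Integrable (fun x : ℝ => x ^ 2 * e x - (2 * b)⁻¹ * e x) :=
    hint2.sub (hinte.const_mul _)
  have htend : Tendsto (fun x : ℝ => x * e x) atTop (nhds 0) := by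
    have h := rpow_mul_exp_neg_mul_sq_isLittleO_exp_neg hb 1
    have h2 : Tendsto (fun x : ℝ => Real.exp (-(1/2) * x)) atTop (nhds 0) := by
      apply Real.tendsto_exp_atBot.comp
      exact Tendsto.const_mul_atTop_of_neg (by norm_num) tendsto_id
    have := h.tendsto_zero_of_tendsto h2
    refine this.congr' ?_
    filter_upwards [eventually_gt_atTop (0:ℝ)] with x hx
    rw [Real.rpow_one]
  have htop : Tendsto (fun x : ℝ => -(2 * b)⁻¹ * x * e x) atTop (nhds 0) := by
    have := htend.const_mul (-(2 * b)⁻¹)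
    simpa [mul_assoc] using this
  have hbot : Tendsto (fun x : ℝ => -(2 * b)⁻¹ * x * e x) atBot (nhds 0) := by
    have hG : Tendsto (fun x : ℝ => -(2 * b)⁻¹ * (-x) * e (-x)) atTop (nhds 0) := by
      have := htend.const_mul ((2 * b)⁻¹)
      refine (by simpa using this : Tendsto (fun x : ℝ => (2*b)⁻¹ * (x * e x)) atTop (nhds 0)).congr ?_
      intro x; simp [he]; ring
    have := hG.comp tendsto_neg_atBot_atTop
    refine this.congr fun x => ?_
    show -(2 * b)⁻¹ * (-(-x)) * e (-(-x)) = _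
    rw [neg_neg]
  have hzero : ∫ x : ℝ, (x ^ 2 * e x - (2 * b)⁻¹ * e x) = 0 := by
    rw [integral_of_hasDerivAt_of_tendsto hF hintF' hbot htop]
    simp
  have hsplit : (fun x : ℝ => x ^ 2 * e x)
      = fun x => (x ^ 2 * e x - (2 * b)⁻¹ * e x) + (2 * b)⁻¹ * e x := by
    funext x; ring
  rw [hsplit, integral_add hintF' (hinte.const_mul _), hzero, zero_add,
    integral_const_mul]
  rw [he]
  simp only
  rw [integral_gaussian]
  field_simp

lemma gauss_sq_integrable {b : ℝ} (hb : 0 < b) :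
    Integrable (fun x : ℝ => x ^ 2 * Real.exp (-b * x ^ 2)) :=
  (integrable_rpow_mul_exp_neg_mul_sq hb (s := 2) (by norm_num)).congr
    (Filter.Eventually.of_forall fun x => by
      show x ^ (2:ℝ) * _ = _
      rw [show ((2:ℝ)) = ((2:ℕ) : ℝ) by norm_num, Real.rpow_natCast])

lemma gauss_moment_sq (σ : ℝ) (hσ : 0 < σ) :
    Integrable (fun z : ℝ => z ^ 2) (gaussianReal 0 ⟨σ ^ 2, sq_nonneg σ⟩) ∧
    ∫ z, z ^ 2 ∂(gaussianReal 0 ⟨σ ^ 2, sq_nonneg σ⟩) = σ ^ 2 := by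
  set v : ℝ≥0 := ⟨σ ^ 2, sq_nonneg σ⟩ with hvdef
  have hvr : (v : ℝ) = σ ^ 2 := rfl
  have hvpos : 0 < (v : ℝ) := by rw [hvr]; positivity
  have hv0 : v ≠ 0 := by
    have : (0:ℝ≥0) < v := by exact_mod_cast hvpos
    exact this.ne'
  set b : ℝ := (2 * (v : ℝ))⁻¹ with hbdef
  have hb : 0 < b := by rw [hbdef]; positivity
  have hexp : ∀ x : ℝ, -(x - 0) ^ 2 / (2 * (v : ℝ)) = -b * x ^ 2 := by
    intro x; rw [hbdef, sub_zero]; ring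
  have hrw : gaussianReal 0 v = volume.withDensity (gaussianPDF 0 v) :=
    gaussianReal_of_var_ne_zero 0 hv0
  have hpdf_eq : (fun x : ℝ => x ^ 2 * gaussianPDFReal 0 v x)
      = fun x => (Real.sqrt (2 * π * v))⁻¹ * (x ^ 2 * Real.exp (-b * x ^ 2)) := by
    funext x
    rw [gaussianPDFReal, ← hexp x]; ring
  have hpdf_int : Integrable (fun x : ℝ => x ^ 2 * gaussianPDFReal 0 v x) := by
    rw [hpdf_eq]
    exact (gauss_sq_integrable hb).const_mul _
  constructor
  · rw [hrw, integrable_withDensity_iff (measurable_gaussianPDF 0 v)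
      (Filter.Eventually.of_forall fun x => ENNReal.ofReal_lt_top)]
    refine hpdf_int.congr (Filter.Eventually.of_forall fun x => ?_)
    simp only [gaussianPDF, ENNReal.toReal_ofReal (gaussianPDFReal_nonneg 0 v x)]
  · rw [hrw]
    have hd : volume.withDensity (gaussianPDF 0 v)
        = volume.withDensity (fun x => ((Real.toNNReal (gaussianPDFReal 0 v x) : ℝ≥0) : ℝ≥0∞)) := rfl
    rw [hd, integral_withDensity_eq_integral_smul
      ((measurable_gaussianPDFReal 0 v).real_toNNReal) (fun z => z ^ 2)]
    have : (fun x : ℝ => Real.toNNReal (gaussianPDFReal 0 v x) • x ^ 2)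
        = fun x : ℝ => x ^ 2 * gaussianPDFReal 0 v x := by
      funext x
      rw [NNReal.smul_def, smul_eq_mul, Real.coe_toNNReal _ (gaussianPDFReal_nonneg 0 v x)]
      ring
    rw [this, hpdf_eq, integral_const_mul, gauss_sq_int hb]
    have h1 : π / b = 2 * π * (v : ℝ) := by
      rw [hbdef, division_def, inv_inv]; ring
    have h2 : 2 * b = (v : ℝ)⁻¹ := by
      rw [hbdef]; field_simp
    rw [h1, h2, ← hvr]
    have hs : Real.sqrt (2 * π * (v : ℝ)) ≠ 0 := by
      refine ne_of_gt (Real.sqrt_pos.2 (by positivity))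
    field_simp

lemma gauss_mean_zero (σ : ℝ) (hσ : 0 < σ) :
    ∫ z, z ∂(gaussianReal 0 ⟨σ ^ 2, sq_nonneg σ⟩) = 0 := by
  set v : ℝ≥0 := ⟨σ ^ 2, sq_nonneg σ⟩ with hvdef
  have hmap : (gaussianReal 0 v).map (fun x => (-1 : ℝ) * x) = gaussianReal 0 v := by
    have h := gaussianReal_map_const_mul (μ := 0) (v := v) (-1)
    simpa using h
  have h2 : ∫ z, z ∂(gaussianReal 0 v) = ∫ z, (-1 : ℝ) * z ∂(gaussianReal 0 v) := by
    conv_lhs => rw [← hmap]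
    rw [integral_map (f := fun z : ℝ => z)
      (by fun_prop : AEMeasurable (fun x : ℝ => (-1:ℝ) * x) (gaussianReal 0 v))
      measurable_id.aestronglyMeasurable]
  have h3 : ∫ z, (-1 : ℝ) * z ∂(gaussianReal 0 v) = -∫ z, z ∂(gaussianReal 0 v) := by
    simp only [neg_one_mul]
    exact integral_neg _
  rw [h3] at h2
  linarith

lemma inner_bound {d : ℕ} (σ C : ℝ) (hσ : 0 < σ) (hC0 : 0 ≤ C)
    (h : ℝ × EuclideanSpace ℝ (Fin d) → ℝ) (hh : ContDiff ℝ 1 h)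
    (hC : ∀ (x : ℝ) (y : EuclideanSpace ℝ (Fin d)), |deriv (fun t => h (t, y)) x| ≤ C)
    (y : EuclideanSpace ℝ (Fin d)) (a b : ℝ) (hb : 0 ≤ b) :
    |∫ z, z * h (a + b * z, y) ∂(gaussianReal 0 ⟨σ ^ 2, sq_nonneg σ⟩)| ≤ C * b * σ ^ 2 := by
  set μ := gaussianReal 0 (⟨σ ^ 2, sq_nonneg σ⟩ : ℝ≥0) with hμ
  set φ : ℝ → ℝ := fun u => h (u, y) with hφ
  have hφd : Differentiable ℝ φ :=
    (hh.differentiable one_ne_zero).comp (differentiable_id.prodMk (differentiable_const y))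
  have hφc : Continuous φ := hh.continuous.comp (continuous_id.prodMk continuous_const)
  have hlip : LipschitzWith ⟨C, hC0⟩ φ := by
    apply lipschitzWith_of_nnnorm_deriv_le hφd
    intro u
    show ((‖deriv φ u‖₊ : ℝ≥0) : ℝ) ≤ C
    rw [coe_nnnorm, Real.norm_eq_abs]
    exact hC u y
  have key : ∀ z : ℝ, |z * (φ (a + b * z) - φ a)| ≤ C * b * z ^ 2 := by
    intro z
    have hd := hlip.dist_le_mul (a + b * z) a
    rw [Real.dist_eq, Real.dist_eq, add_sub_cancel_left] at hd
    calc |z * (φ (a + b * z) - φ a)| = |z| * |φ (a + b * z) - φ a| := abs_mul _ _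
      _ ≤ |z| * (↑(⟨C, hC0⟩ : ℝ≥0) * |b * z|) := mul_le_mul_of_nonneg_left hd (abs_nonneg z)
      _ = C * b * z ^ 2 := by
          rw [abs_mul, abs_of_nonneg hb, ← sq_abs]
          push_cast
          ring
  obtain ⟨hint2, hvar⟩ := gauss_moment_sq σ hσ
  have hmean := gauss_mean_zero σ hσ
  have hint_id : Integrable (fun z : ℝ => z) μ := by
    haveI : IsProbabilityMeasure μ := instIsProbabilityMeasureGaussianReal 0 _
    refine ((hint2.add (integrable_const 1)).mono' measurable_id.aestronglyMeasurable ?_)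
    refine Filter.Eventually.of_forall fun z => ?_
    rw [Real.norm_eq_abs]
    simp only [Pi.add_apply]
    nlinarith [sq_abs z, abs_nonneg z]
  have hmeas1 : AEStronglyMeasurable (fun z : ℝ => z * (φ (a + b * z) - φ a)) μ := by
    apply Continuous.aestronglyMeasurable
    exact continuous_id.mul
      ((hφc.comp (continuous_const.add (continuous_const.mul continuous_id))).sub continuous_const)
  have hint1 : Integrable (fun z : ℝ => z * (φ (a + b * z) - φ a)) μ := by
    refine (hint2.const_mul (C * b)).mono' hmeas1 ?_
    exact Filter.Eventually.of_forall fun z => by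
      rw [Real.norm_eq_abs]; exact key z
  have hsplit : (fun z : ℝ => z * h (a + b * z, y))
      = fun z => z * (φ (a + b * z) - φ a) + z * φ a := by
    funext z; simp only [hφ]; ring
  rw [hsplit, integral_add hint1 (hint_id.mul_const (φ a)), integral_mul_const, hmean,
    zero_mul, add_zero]
  have hle := norm_integral_le_of_norm_le (hint2.const_mul (C * b))
    (Filter.Eventually.of_forall fun z => by rw [Real.norm_eq_abs]; exact key z)
  rw [Real.norm_eq_abs] at hle
  calc |∫ z, z * (φ (a + b * z) - φ a) ∂μ| ≤ ∫ z, C * b * z ^ 2 ∂μ := hle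
    _ = C * b * σ ^ 2 := by rw [integral_const_mul, hvar]

end Aux

/-- The Stein solution `f_h` associated to `h : ℝ × ℝ^d → ℝ`:
`f_h(x,y) = −(1/σ²) ∫₀¹ (2√(t(1−t)))⁻¹ ⬝ E[Z ⬝ h(√t x + √(1−t) Z, y)] dt`
where `Z ~ N(0, σ²)`. -/
noncomputable def steinSol {d : ℕ} (σ : ℝ)
    (h : ℝ × EuclideanSpace ℝ (Fin d) → ℝ)
    (x : ℝ) (y : EuclideanSpace ℝ (Fin d)) : ℝ :=
  -(1 / σ ^ 2) * ∫ t in (0:ℝ)..1, (2 * Real.sqrt (t * (1 - t)))⁻¹ *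
    ∫ z, z * h (Real.sqrt t * x + Real.sqrt (1 - t) * z, y)
      ∂(gaussianReal 0 ⟨σ ^ 2, sq_nonneg σ⟩)

open Real Set Filter NNReal ENNReal in
/-- The Stein solution is bounded, with `‖f_h‖_∞ ≤ ‖∂_x h‖_∞`. -/
theorem stmt5 {d : ℕ} (hd : 1 ≤ d) (σ : ℝ) (hσ : 0 < σ)
    (h : ℝ × EuclideanSpace ℝ (Fin d) → ℝ)
    (hh : ContDiff ℝ 1 h)
    (hhB : ∃ C : ℝ, ∀ p, ‖fderiv ℝ h p‖ ≤ C) :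
    ∀ C : ℝ, (∀ (x : ℝ) (y : EuclideanSpace ℝ (Fin d)),
        |deriv (fun t => h (t, y)) x| ≤ C) →
      ∀ (x : ℝ) (y : EuclideanSpace ℝ (Fin d)), |steinSol σ h x y| ≤ C := by
  intro C hC x y
  have hC0 : 0 ≤ C := le_trans (abs_nonneg _) (hC 0 0)
  have hσ2 : (0:ℝ) < σ ^ 2 := by positivity
  simp only [steinSol]
  rw [abs_mul, abs_neg, abs_of_pos (by positivity : (0:ℝ) < 1 / σ ^ 2)]
  set K : ℝ := C * σ ^ 2 / 2 with hK
  have hmain : |∫ t in (0:ℝ)..1, (2 * Real.sqrt (t * (1 - t)))⁻¹ *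
      ∫ z, z * h (Real.sqrt t * x + Real.sqrt (1 - t) * z, y)
        ∂(gaussianReal 0 ⟨σ ^ 2, sq_nonneg σ⟩)| ≤ C * σ ^ 2 := by
    rw [intervalIntegral.integral_of_le zero_le_one, ← Real.norm_eq_abs]
    have hgint : IntegrableOn (fun t : ℝ => K * t ^ (-(1/2) : ℝ)) (Ioc 0 1) := by
      have h0 : IntervalIntegrable (fun t : ℝ => t ^ (-(1/2) : ℝ)) volume 0 1 :=
        intervalIntegral.intervalIntegrable_rpow' (by norm_num)
      have h1 := h0.const_mul K
      rwa [intervalIntegrable_iff_integrableOn_Ioc_of_le zero_le_one] at h1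
    have hgval : ∫ t in Ioc (0:ℝ) 1, K * t ^ (-(1/2) : ℝ) = C * σ ^ 2 := by
      rw [← intervalIntegral.integral_of_le zero_le_one,
        intervalIntegral.integral_const_mul, integral_rpow (Or.inl (by norm_num))]
      rw [show (-(1/2) : ℝ) + 1 = 1/2 by norm_num, Real.one_rpow,
        Real.zero_rpow (by norm_num), hK]
      ring
    have hbd : ∀ᵐ t ∂(volume.restrict (Ioc (0:ℝ) 1)),
        ‖(2 * Real.sqrt (t * (1 - t)))⁻¹ *
          ∫ z, z * h (Real.sqrt t * x + Real.sqrt (1 - t) * z, y)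
            ∂(gaussianReal 0 ⟨σ ^ 2, sq_nonneg σ⟩)‖ ≤ K * t ^ (-(1/2) : ℝ) := by
      have hne : ∀ᵐ (t : ℝ) ∂volume, t ≠ 1 := by
        rw [ae_iff]
        refine measure_mono_null ?_ (Real.volume_singleton (a := 1))
        intro t ht
        simpa using ht
      filter_upwards [ae_restrict_of_ae hne, ae_restrict_mem measurableSet_Ioc] with t ht1 htm
      obtain ⟨ht0, ht1'⟩ := htm
      have h1t : (0:ℝ) < 1 - t := by
        rcases lt_of_le_of_ne ht1' ht1 with hlt
        linarith
      have hI := inner_bound σ C hσ hC0 h hh hC y (Real.sqrt t * x) (Real.sqrt (1 - t))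
        (Real.sqrt_nonneg _)
      rw [Real.norm_eq_abs, abs_mul,
        abs_of_nonneg (by positivity : (0:ℝ) ≤ (2 * Real.sqrt (t * (1 - t)))⁻¹)]
      calc (2 * Real.sqrt (t * (1 - t)))⁻¹ *
            |∫ z, z * h (Real.sqrt t * x + Real.sqrt (1 - t) * z, y)
              ∂(gaussianReal 0 ⟨σ ^ 2, sq_nonneg σ⟩)|
          ≤ (2 * Real.sqrt (t * (1 - t)))⁻¹ * (C * Real.sqrt (1 - t) * σ ^ 2) :=
            mul_le_mul_of_nonneg_left hI (by positivity)
        _ = K * t ^ (-(1/2) : ℝ) := by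
            rw [Real.sqrt_mul ht0.le]
            have hst : (0:ℝ) < Real.sqrt t := Real.sqrt_pos.2 ht0
            have hs1 : (0:ℝ) < Real.sqrt (1 - t) := Real.sqrt_pos.2 h1t
            have hrpow : t ^ (-(1/2) : ℝ) = (Real.sqrt t)⁻¹ := by
              rw [show (-(1/2) : ℝ) = -(1/2) by norm_num, Real.rpow_neg ht0.le,
                ← Real.sqrt_eq_rpow]
            rw [hrpow, hK]
            field_simp
    calc ‖∫ t in Ioc (0:ℝ) 1, (2 * Real.sqrt (t * (1 - t)))⁻¹ *
          ∫ z, z * h (Real.sqrt t * x + Real.sqrt (1 - t) * z, y)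
            ∂(gaussianReal 0 ⟨σ ^ 2, sq_nonneg σ⟩)‖
        ≤ ∫ t in Ioc (0:ℝ) 1, K * t ^ (-(1/2) : ℝ) := norm_integral_le_of_norm_le hgint hbd
      _ = C * σ ^ 2 := hgval
  calc 1 / σ ^ 2 * |∫ t in (0:ℝ)..1, (2 * Real.sqrt (t * (1 - t)))⁻¹ *
        ∫ z, z * h (Real.sqrt t * x + Real.sqrt (1 - t) * z, y)
          ∂(gaussianReal 0 ⟨σ ^ 2, sq_nonneg σ⟩)|
      ≤ 1 / σ ^ 2 * (C * σ ^ 2) := mul_le_mul_of_nonneg_left hmain (by positivity)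
    _ = C := by field_simp
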